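/- The map (v,u) ↦ e(v/√|v|, u) (extended by the value e(0,u) at v = 0) is Lipschitz continuous on ℝ^d × S₀^d; i.e., there exists L > 0 such that |e(a/√|a|, u) − e(b/√|b|, w)| ≤ L(|a − b| + |u − w|) for all a, b ∈ ℝ^d and u, w ∈ S₀^d. -/

import Mathlib

open scoped BigOperators

/-- The largest eigenvalue of a symmetric matrix `M`, defined as the supremum of
`xᵀ M x` over unit vectors `x ∈ ℝ^d`. -/
noncomputable def lambdaMax {d : ℕ} (M : Matrix (Fin d) (Fin d) ℝ) : ℝ :=
  sSup {r : ℝ | ∃ x : EuclideanSpace ℝ (Fin d), ‖x‖ = 1 ∧ r = ∑ i, ∑ j, x i * M i j * x j}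

/-- The generalised energy `e(v,u) = (d/2)·λ_max(v ⊗ v − u)`. -/
noncomputable def genE {d : ℕ} (v : EuclideanSpace ℝ (Fin d))
    (u : Matrix (Fin d) (Fin d) ℝ) : ℝ :=
  (d : ℝ) / 2 * lambdaMax (Matrix.of fun i j => v i * v j - u i j)

/-- A fixed matrix norm: the Frobenius norm. -/
noncomputable def frobNorm {d : ℕ} (u : Matrix (Fin d) (Fin d) ℝ) : ℝ :=
  Real.sqrt (∑ i, ∑ j, (u i j) ^ 2)

section Aux
variable {d : ℕ}

noncomputable def outerM (x y : EuclideanSpace ℝ (Fin d)) : Matrix (Fin d) (Fin d) ℝ :=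
  Matrix.of fun i j => x i * y j

lemma euclid_norm_eq {ι : Type*} [Fintype ι] (x : EuclideanSpace ℝ ι) : ‖x‖ = Real.sqrt (∑ i, x i ^ 2) := by
  rw [EuclideanSpace.norm_eq]
  congr 1
  exact Finset.sum_congr rfl fun i _ => by rw [Real.norm_eq_abs, sq_abs]

lemma frobNorm_nonneg (M : Matrix (Fin d) (Fin d) ℝ) : 0 ≤ frobNorm M := Real.sqrt_nonneg _

lemma frobNorm_outer (x y : EuclideanSpace ℝ (Fin d)) : frobNorm (outerM x y) = ‖x‖ * ‖y‖ := by
  rw [frobNorm, euclid_norm_eq, euclid_norm_eq, ← Real.sqrt_mul (by positivity)]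
  congr 1
  rw [Finset.sum_mul_sum]
  exact Finset.sum_congr rfl fun i _ => Finset.sum_congr rfl fun j _ => by
    simp [outerM]; ring

noncomputable def toE (M : Matrix (Fin d) (Fin d) ℝ) : EuclideanSpace ℝ (Fin d × Fin d) :=
  WithLp.toLp 2 (fun p : Fin d × Fin d => M p.1 p.2)

lemma frobNorm_eq_norm (M : Matrix (Fin d) (Fin d) ℝ) :
    frobNorm M = ‖toE M‖ := by
  rw [euclid_norm_eq, frobNorm]
  congr 1
  rw [Fintype.sum_prod_type]
  exact Finset.sum_congr rfl fun i _ => Finset.sum_congr rfl fun j _ => by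
    simp [toE]

lemma frobNorm_add_le (A B : Matrix (Fin d) (Fin d) ℝ) :
    frobNorm (A + B) ≤ frobNorm A + frobNorm B := by
  rw [frobNorm_eq_norm, frobNorm_eq_norm, frobNorm_eq_norm]
  have h : toE (A + B) = toE A + toE B := by
    ext p; simp [toE]
  rw [h]
  exact norm_add_le _ _

lemma frobNorm_neg (A : Matrix (Fin d) (Fin d) ℝ) : frobNorm (-A) = frobNorm A := by
  unfold frobNorm
  congr 1
  exact Finset.sum_congr rfl fun i _ => Finset.sum_congr rfl fun j _ => by
    simp [Matrix.neg_apply]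

lemma frobNorm_sub_le (A B : Matrix (Fin d) (Fin d) ℝ) :
    frobNorm (A - B) ≤ frobNorm A + frobNorm B := by
  rw [sub_eq_add_neg]
  simpa [frobNorm_neg] using frobNorm_add_le A (-B)

lemma quad_abs_le (M : Matrix (Fin d) (Fin d) ℝ) (x : EuclideanSpace ℝ (Fin d))
    (hx : ‖x‖ = 1) : |∑ i, ∑ j, x i * M i j * x j| ≤ frobNorm M := by
  have hxsum : (∑ i, x i ^ 2) = 1 := by
    have := euclid_norm_eq x
    rw [hx] at this
    have h0 : 0 ≤ ∑ i, x i ^ 2 := by positivity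
    nlinarith [Real.sq_sqrt h0]
  have hMsum : 0 ≤ ∑ i, ∑ j, M i j ^ 2 := by positivity
  have cs := Finset.sum_mul_sq_le_sq_mul_sq Finset.univ
    (fun p : Fin d × Fin d => x p.1 * x p.2) (fun p : Fin d × Fin d => M p.1 p.2)
  have h1 : (∑ p : Fin d × Fin d, (x p.1 * x p.2) * M p.1 p.2)
      = ∑ i, ∑ j, x i * M i j * x j := by
    rw [Fintype.sum_prod_type]
    exact Finset.sum_congr rfl fun i _ => Finset.sum_congr rfl fun j _ => by ring
  have h2 : (∑ p : Fin d × Fin d, (x p.1 * x p.2) ^ 2) = 1 := by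
    rw [Fintype.sum_prod_type]
    calc (∑ i, ∑ j, (x i * x j) ^ 2) = (∑ i, x i ^ 2) * (∑ j, x j ^ 2) := by
          rw [Finset.sum_mul_sum]
          exact Finset.sum_congr rfl fun i _ => Finset.sum_congr rfl fun j _ => by ring
      _ = 1 := by rw [hxsum]; ring
  have h3 : (∑ p : Fin d × Fin d, (M p.1 p.2) ^ 2) = ∑ i, ∑ j, M i j ^ 2 :=
    Fintype.sum_prod_type _
  rw [h1, h2, h3, one_mul] at cs
  have h4 := Real.sqrt_le_sqrt cs
  rw [Real.sqrt_sq_eq_abs] at h4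
  exact h4

lemma lambdaMax_nonempty (hd : 0 < d) (M : Matrix (Fin d) (Fin d) ℝ) :
    {r : ℝ | ∃ x : EuclideanSpace ℝ (Fin d), ‖x‖ = 1 ∧
      r = ∑ i, ∑ j, x i * M i j * x j}.Nonempty := by
  refine ⟨_, EuclideanSpace.single ⟨0, hd⟩ (1:ℝ), ?_, rfl⟩
  simp [EuclideanSpace.norm_single]

lemma lambdaMax_bddAbove (M : Matrix (Fin d) (Fin d) ℝ) :
    BddAbove {r : ℝ | ∃ x : EuclideanSpace ℝ (Fin d), ‖x‖ = 1 ∧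
      r = ∑ i, ∑ j, x i * M i j * x j} := by
  refine ⟨frobNorm M, ?_⟩
  rintro r ⟨x, hx, rfl⟩
  exact le_trans (le_abs_self _) (quad_abs_le M x hx)

lemma lambdaMax_le_add (hd : 0 < d) (M N : Matrix (Fin d) (Fin d) ℝ) :
    lambdaMax M ≤ lambdaMax N + frobNorm (M - N) := by
  unfold lambdaMax
  apply csSup_le (lambdaMax_nonempty hd M)
  rintro r ⟨x, hx, rfl⟩
  have split : (∑ i, ∑ j, x i * M i j * x j)
      = (∑ i, ∑ j, x i * N i j * x j) + ∑ i, ∑ j, x i * (M - N) i j * x j := by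
    rw [← Finset.sum_add_distrib]
    refine Finset.sum_congr rfl fun i _ => ?_
    rw [← Finset.sum_add_distrib]
    refine Finset.sum_congr rfl fun j _ => ?_
    rw [Matrix.sub_apply]; ring
  have h1 : (∑ i, ∑ j, x i * N i j * x j) ≤ sSup {r : ℝ |
      ∃ x : EuclideanSpace ℝ (Fin d), ‖x‖ = 1 ∧ r = ∑ i, ∑ j, x i * N i j * x j} :=
    le_csSup (lambdaMax_bddAbove N) ⟨x, hx, rfl⟩
  have h2 : (∑ i, ∑ j, x i * (M - N) i j * x j) ≤ frobNorm (M - N) :=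
    le_trans (le_abs_self _) (quad_abs_le _ x hx)
  rw [split]
  linarith

lemma lambdaMax_abs_sub (hd : 0 < d) (M N : Matrix (Fin d) (Fin d) ℝ) :
    |lambdaMax M - lambdaMax N| ≤ frobNorm (M - N) := by
  have h1 := lambdaMax_le_add hd M N
  have h2 := lambdaMax_le_add hd N M
  have h3 : frobNorm (N - M) = frobNorm (M - N) := by
    rw [← frobNorm_neg (M - N), neg_sub]
  rw [abs_sub_le_iff]
  exact ⟨by linarith, by linarith⟩

lemma inv_mul_self_le_one {t : ℝ} (ht : 0 ≤ t) : t⁻¹ * t ≤ 1 := by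
  rcases eq_or_lt_of_le ht with h | h
  · simp [← h]
  · rw [inv_mul_cancel₀ h.ne']

lemma inv_diff_bound (a b : EuclideanSpace ℝ (Fin d)) :
    |‖a‖⁻¹ - ‖b‖⁻¹| * ‖a‖ * ‖b‖ ≤ ‖a - b‖ := by
  by_cases ha : ‖a‖ = 0
  · simp [ha]
  · by_cases hb : ‖b‖ = 0
    · simp [hb]
    · have key : ‖a‖⁻¹ - ‖b‖⁻¹ = (‖b‖ - ‖a‖) * (‖a‖⁻¹ * ‖b‖⁻¹) := by
        field_simp
      rw [key, abs_mul, abs_of_nonneg (by positivity : (0:ℝ) ≤ ‖a‖⁻¹ * ‖b‖⁻¹)]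
      have h2 : |‖b‖ - ‖a‖| * (‖a‖⁻¹ * ‖b‖⁻¹) * ‖a‖ * ‖b‖
          = |‖b‖ - ‖a‖| * ((‖a‖⁻¹ * ‖a‖) * (‖b‖⁻¹ * ‖b‖)) := by ring
      rw [h2, inv_mul_cancel₀ ha, inv_mul_cancel₀ hb, mul_one, mul_one]
      rw [abs_sub_comm]
      exact abs_norm_sub_norm_le a b

lemma sqrt_inv_sq (a : EuclideanSpace ℝ (Fin d)) :
    (Real.sqrt ‖a‖)⁻¹ * (Real.sqrt ‖a‖)⁻¹ = ‖a‖⁻¹ := by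
  rw [← mul_inv, Real.mul_self_sqrt (norm_nonneg a)]

lemma outer_decomp (a b : EuclideanSpace ℝ (Fin d)) :
    outerM ((Real.sqrt ‖a‖)⁻¹ • a) ((Real.sqrt ‖a‖)⁻¹ • a)
      - outerM ((Real.sqrt ‖b‖)⁻¹ • b) ((Real.sqrt ‖b‖)⁻¹ • b)
    = outerM (‖a‖⁻¹ • a) (a - b) + outerM ((‖a‖⁻¹ - ‖b‖⁻¹) • a) b
        + outerM (‖b‖⁻¹ • (a - b)) b := by
  have hs := sqrt_inv_sq a
  have ht := sqrt_inv_sq b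
  ext i j
  simp only [outerM, Matrix.sub_apply, Matrix.add_apply, Matrix.of_apply,
    PiLp.smul_apply, PiLp.sub_apply, smul_eq_mul]
  linear_combination (a i * a j) * hs - (b i * b j) * ht

lemma outer_diff_le (a b : EuclideanSpace ℝ (Fin d)) :
    frobNorm (outerM ((Real.sqrt ‖a‖)⁻¹ • a) ((Real.sqrt ‖a‖)⁻¹ • a)
      - outerM ((Real.sqrt ‖b‖)⁻¹ • b) ((Real.sqrt ‖b‖)⁻¹ • b)) ≤ 3 * ‖a - b‖ := by
  rw [outer_decomp]
  have tri : frobNorm (outerM (‖a‖⁻¹ • a) (a - b) + outerM ((‖a‖⁻¹ - ‖b‖⁻¹) • a) b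
        + outerM (‖b‖⁻¹ • (a - b)) b)
      ≤ frobNorm (outerM (‖a‖⁻¹ • a) (a - b)) + frobNorm (outerM ((‖a‖⁻¹ - ‖b‖⁻¹) • a) b)
        + frobNorm (outerM (‖b‖⁻¹ • (a - b)) b) := by
    calc _ ≤ frobNorm (outerM (‖a‖⁻¹ • a) (a - b) + outerM ((‖a‖⁻¹ - ‖b‖⁻¹) • a) b)
            + frobNorm (outerM (‖b‖⁻¹ • (a - b)) b) := frobNorm_add_le _ _
      _ ≤ _ := by
          have := frobNorm_add_le (outerM (‖a‖⁻¹ • a) (a - b)) (outerM ((‖a‖⁻¹ - ‖b‖⁻¹) • a) b)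
          linarith
  have e1 : frobNorm (outerM (‖a‖⁻¹ • a) (a - b)) ≤ ‖a - b‖ := by
    rw [frobNorm_outer, norm_smul, Real.norm_eq_abs, abs_of_nonneg (by positivity : (0:ℝ) ≤ ‖a‖⁻¹)]
    exact mul_le_of_le_one_left (norm_nonneg _) (inv_mul_self_le_one (norm_nonneg a))
  have e2 : frobNorm (outerM ((‖a‖⁻¹ - ‖b‖⁻¹) • a) b) ≤ ‖a - b‖ := by
    rw [frobNorm_outer, norm_smul, Real.norm_eq_abs]
    exact inv_diff_bound a b
  have e3 : frobNorm (outerM (‖b‖⁻¹ • (a - b)) b) ≤ ‖a - b‖ := by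
    rw [frobNorm_outer, norm_smul, Real.norm_eq_abs, abs_of_nonneg (by positivity : (0:ℝ) ≤ ‖b‖⁻¹)]
    have : ‖b‖⁻¹ * ‖a - b‖ * ‖b‖ = (‖b‖⁻¹ * ‖b‖) * ‖a - b‖ := by ring
    rw [this]
    exact mul_le_of_le_one_left (norm_nonneg _) (inv_mul_self_le_one (norm_nonneg b))
  linarith

end Aux

/-- The map `(v,u) ↦ e(v/√|v|, u)` (extended by the value `e(0,u)` at `v = 0`, which is what
the formula `(√‖v‖)⁻¹ • v` gives, since in Lean `0⁻¹ = 0`) is Lipschitz continuous on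
`ℝ^d × S₀^d`. -/
theorem genE_rescaled_lipschitz {d : ℕ} (hd : 0 < d) :
    ∃ L > (0 : ℝ), ∀ (a b : EuclideanSpace ℝ (Fin d)) (u w : Matrix (Fin d) (Fin d) ℝ),
      u.IsSymm → u.trace = 0 → w.IsSymm → w.trace = 0 →
      |genE ((Real.sqrt ‖a‖)⁻¹ • a) u - genE ((Real.sqrt ‖b‖)⁻¹ • b) w| ≤
        L * (‖a - b‖ + frobNorm (u - w)) := by
  have hdpos : (0:ℝ) < d := by exact_mod_cast hd
  refine ⟨3 * d / 2, by positivity, ?_⟩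
  intro a b u w _ _ _ _
  set va := (Real.sqrt ‖a‖)⁻¹ • a with hva
  set vb := (Real.sqrt ‖b‖)⁻¹ • b with hvb
  set A := Matrix.of fun i j => va i * va j - u i j with hA
  set B := Matrix.of fun i j => vb i * vb j - w i j with hB
  have hgen : genE va u - genE vb w = (d:ℝ)/2 * (lambdaMax A - lambdaMax B) := by
    simp only [genE, hA, hB]; ring
  have hc : (0:ℝ) ≤ (d:ℝ)/2 := by positivity
  rw [hgen, abs_mul, abs_of_nonneg hc]
  have hL := lambdaMax_abs_sub hd A B
  have hAB : A - B = (outerM va va - outerM vb vb) - (u - w) := by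
    ext i j
    simp only [hA, hB, outerM, Matrix.sub_apply, Matrix.of_apply]
    ring
  have h1 := frobNorm_sub_le (outerM va va - outerM vb vb) (u - w)
  have h2 := outer_diff_le a b
  rw [← hva, ← hvb] at h2
  have h3 := frobNorm_nonneg (u - w)
  have h4 : (0:ℝ) ≤ ‖a - b‖ := norm_nonneg _
  have step : |lambdaMax A - lambdaMax B| ≤ 3 * ‖a - b‖ + frobNorm (u - w) := by
    rw [hAB] at hL
    linarith
  calc (d:ℝ)/2 * |lambdaMax A - lambdaMax B|
      ≤ (d:ℝ)/2 * (3 * ‖a - b‖ + frobNorm (u - w)) := mul_le_mul_of_nonneg_left step hc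
    _ ≤ 3 * d / 2 * (‖a - b‖ + frobNorm (u - w)) := by nlinarith [mul_nonneg hc h3]
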